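/- For any γ ∈ ℂ, the linear map ρ_γ from the Virasoro algebra to the quotient of the twisted Heisenberg–Virasoro algebra by the central element C_I, defined by ρ_γ(L̄(n)) = L(n) + γ n I(n) + δ_{n,0} γ C_{LI} and ρ_γ(C̄_L) = C_L + 24γ C_{LI}, is an injective Lie algebra homomorphism. -/

import Mathlib

/-- For any `γ ∈ ℂ`, the map `ρ_γ` from the Virasoro algebra to the
quotient of the twisted Heisenberg–Virasoro algebra by (the ideal generated by) the
central element `C_I`, defined by `ρ_γ(L̄(n)) = L(n) + γn I(n) + δ_{n,0} γ C_{LI}` and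
`ρ_γ(C̄_L) = C_L + 24γ C_{LI}`, is an injective Lie algebra homomorphism. -/
theorem stmt1
    (HV : Type) [LieRing HV] [LieAlgebra ℂ HV]
    (L I : ℤ → HV) (CL CLI CI : HV)
    (bHV : Module.Basis (ℤ ⊕ ℤ ⊕ Fin 3) ℂ HV)
    (hb1 : ∀ n, bHV (Sum.inl n) = L n)
    (hb2 : ∀ n, bHV (Sum.inr (Sum.inl n)) = I n)
    (hb3 : bHV (Sum.inr (Sum.inr 0)) = CL)
    (hb4 : bHV (Sum.inr (Sum.inr 1)) = CLI)
    (hb5 : bHV (Sum.inr (Sum.inr 2)) = CI)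
    (hLL : ∀ n m : ℤ, ⁅L n, L m⁆ =
      ((n : ℂ) - m) • L (n + m) + (if n = -m then ((n : ℂ)^3 - n) / 12 else 0) • CL)
    (hLI : ∀ n m : ℤ, ⁅L n, I m⁆ =
      (-(m : ℂ)) • I (n + m) - (if n = -m then (n : ℂ)^2 + n else 0) • CLI)
    (hII : ∀ n m : ℤ, ⁅I n, I m⁆ = (if n = -m then (n : ℂ) else 0) • CI)
    (hCL : ∀ x : HV, ⁅CL, x⁆ = 0) (hCLI : ∀ x : HV, ⁅CLI, x⁆ = 0) (hCI : ∀ x : HV, ⁅CI, x⁆ = 0)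
    (Vir : Type) [LieRing Vir] [LieAlgebra ℂ Vir]
    (Lb : ℤ → Vir) (CbL : Vir)
    (bV : Module.Basis (ℤ ⊕ Unit) ℂ Vir)
    (hv1 : ∀ n, bV (Sum.inl n) = Lb n)
    (hv2 : bV (Sum.inr ()) = CbL)
    (hVLL : ∀ n m : ℤ, ⁅Lb n, Lb m⁆ =
      ((n : ℂ) - m) • Lb (n + m) + (if n = -m then ((n : ℂ)^3 - n) / 12 else 0) • CbL)
    (hVC : ∀ x : Vir, ⁅CbL, x⁆ = 0)
    (γ : ℂ) :
    ∃ ρ : Vir →ₗ⁅ℂ⁆ HV ⧸ (LieSubmodule.lieSpan ℂ HV {CI} : LieIdeal ℂ HV),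
      (∀ n : ℤ, ρ (Lb n) = LieSubmodule.Quotient.mk' _
        (L n + (γ * n) • I n + (if n = 0 then γ • CLI else 0))) ∧
      ρ CbL = LieSubmodule.Quotient.mk' _ (CL + (24 * γ) • CLI) ∧
      Function.Injective ρ := by
  classical
  set N : LieIdeal ℂ HV := LieSubmodule.lieSpan ℂ HV {CI} with hN
  set mk : HV →ₗ[ℂ] HV ⧸ N := (LieSubmodule.lieSpan ℂ HV {CI} : LieIdeal ℂ HV).toSubmodule.mkQ with hmk
  -- the ideal is contained in the span of CI
  have hspan_lie : ∀ (x m : HV), m ∈ Submodule.span ℂ ({CI} : Set HV) →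
      ⁅x, m⁆ ∈ Submodule.span ℂ ({CI} : Set HV) := by
    intro x m hm
    obtain ⟨c, rfl⟩ := Submodule.mem_span_singleton.mp hm
    rw [lie_smul, ← lie_skew, hCI, neg_zero, smul_zero]
    exact Submodule.zero_mem _
  have hNle : N.toSubmodule ≤ Submodule.span ℂ ({CI} : Set HV) := by
    have hle : N ≤ (⟨Submodule.span ℂ ({CI} : Set HV),
        fun {x m} hm => hspan_lie x m hm⟩ : LieIdeal ℂ HV) := by
      rw [hN]
      refine LieSubmodule.lieSpan_le.mpr ?_
      intro x hx
      rw [Set.mem_singleton_iff] at hx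
      rw [hx]
      exact Submodule.mem_span_singleton_self CI
    exact fun x hx => hle hx
  have hCImem : CI ∈ N := LieSubmodule.subset_lieSpan rfl
  have hmkCI : mk CI = 0 := (LieSubmodule.Quotient.mk_eq_zero N).mpr hCImem
  have hmkbr : ∀ a b : HV, ⁅mk a, mk b⁆ = mk ⁅a, b⁆ :=
    fun a b => (LieSubmodule.Quotient.mk_bracket (I := N) a b).symm
  have hmksur : Function.Surjective mk := Quot.mk_surjective
  -- quotient atoms
  set ℓ : ℤ → HV ⧸ N := fun n => mk (L n) with hℓ
  set ι : ℤ → HV ⧸ N := fun n => mk (I n) with hι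
  set c : HV ⧸ N := mk CL with hc
  set d : HV ⧸ N := mk CLI with hd
  -- centrality in quotient
  have hcen : ∀ (z : HV), (∀ x : HV, ⁅z, x⁆ = 0) → ∀ q : HV ⧸ N, ⁅mk z, q⁆ = 0 := by
    intro z hz q
    obtain ⟨y, rfl⟩ := hmksur q
    rw [hmkbr, hz, map_zero]
  have hcen' : ∀ (z : HV), (∀ x : HV, ⁅z, x⁆ = 0) → ∀ q : HV ⧸ N, ⁅q, mk z⁆ = 0 := by
    intro z hz q
    rw [← lie_skew, hcen z hz q, neg_zero]
  -- quotient bracket relations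
  have rLL : ∀ n m : ℤ, ⁅ℓ n, ℓ m⁆ =
      ((n : ℂ) - m) • ℓ (n + m) + (if n = -m then ((n : ℂ)^3 - n) / 12 else 0) • c := by
    intro n m
    rw [hℓ, hmkbr, hLL, map_add, map_smul, map_smul]
  have rLI : ∀ n m : ℤ, ⁅ℓ n, ι m⁆ =
      (-(m : ℂ)) • ι (n + m) - (if n = -m then (n : ℂ)^2 + n else 0) • d := by
    intro n m
    rw [hℓ, hι, hmkbr, hLI, map_sub, map_smul, map_smul]
  have rIL : ∀ n m : ℤ, ⁅ι n, ℓ m⁆ =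
      (n : ℂ) • ι (n + m) + (if m = -n then (m : ℂ)^2 + m else 0) • d := by
    intro n m
    rw [← lie_skew, rLI m n, add_comm m n]
    module
  have rII : ∀ n m : ℤ, ⁅ι n, ι m⁆ = 0 := by
    intro n m
    rw [hι, hmkbr, hII, map_smul, hmkCI, smul_zero]
  have rc : ∀ q : HV ⧸ N, ⁅c, q⁆ = 0 := hcen CL hCL
  have rc' : ∀ q : HV ⧸ N, ⁅q, c⁆ = 0 := hcen' CL hCL
  have rd : ∀ q : HV ⧸ N, ⁅d, q⁆ = 0 := hcen CLI hCLI
  have rd' : ∀ q : HV ⧸ N, ⁅q, d⁆ = 0 := hcen' CLI hCLI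
  -- target vectors
  set g : ℤ ⊕ Unit → HV ⧸ N := fun i => Sum.elim
    (fun n => ℓ n + (γ * n) • ι n + (if n = 0 then γ • d else 0))
    (fun _ => c + (24 * γ) • d) i with hg
  have hgmk : ∀ n : ℤ, g (Sum.inl n) =
      mk (L n + (γ * n) • I n + (if n = 0 then γ • CLI else 0)) := by
    intro n
    simp only [hg, Sum.elim_inl, hℓ, hι, hd, map_add, map_smul, apply_ite mk, map_zero]
  have hgmk' : g (Sum.inr ()) = mk (CL + (24 * γ) • CLI) := by
    simp only [hg, Sum.elim_inr, hc, hd, map_add, map_smul]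
  set f : Vir →ₗ[ℂ] HV ⧸ N := bV.constr ℂ g with hf
  have hfL : ∀ n, f (Lb n) = g (Sum.inl n) := fun n => by
    rw [← hv1, hf, Module.Basis.constr_basis]
  have hfC : f CbL = g (Sum.inr ()) := by rw [← hv2, hf, Module.Basis.constr_basis]
  -- bracket compatibility on basis vectors
  have key : ∀ i j, f ⁅bV i, bV j⁆ = ⁅f (bV i), f (bV j)⁆ := by
    rintro (n | _) (m | _)
    · rw [hv1, hv1, hVLL, map_add, map_smul, map_smul, hfL, hfL, hfL, hfC]
      simp only [hg, Sum.elim_inl, Sum.elim_inr]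
      have eL : ∀ k : ℤ, ⁅ℓ n + (γ * ↑n) • ι n + (if n = 0 then γ • d else 0), ℓ k + (γ * ↑k) • ι k + (if k = 0 then γ • d else 0)⁆ =
          ⁅ℓ n, ℓ k⁆ + (γ * k) • ⁅ℓ n, ι k⁆ + (γ * n) • ⁅ι n, ℓ k⁆ := by
        intro k
        have h1 : ∀ q : HV ⧸ N, ⁅q, (if k = 0 then γ • d else 0)⁆ = 0 := by
          intro q; split
          · rw [lie_smul, rd', smul_zero]
          · exact lie_zero q
        have h2 : ∀ q : HV ⧸ N, ⁅(if n = 0 then γ • d else 0), q⁆ = 0 := by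
          intro q; split
          · rw [smul_lie, rd, smul_zero]
          · exact zero_lie q
        simp only [lie_add, add_lie, lie_smul, smul_lie, h1, h2, rII, add_zero, smul_zero]
        module
      rw [eL m, rLL, rLI, rIL]
      by_cases hnm : n = -m
      · subst hnm
        simp only [neg_add_cancel, if_pos rfl, if_pos (by ring : m = -(-m))]
        rcases eq_or_ne m 0 with rfl | hm0
        · norm_num
        · simp only [if_true]
          push_cast
          module
      · have h1 : n + m ≠ 0 := fun h => hnm (by omega)
        have h2 : ¬ m = -n := fun h => hnm (by omega)
        rw [if_neg hnm, if_neg hnm, if_neg h2, if_neg h1]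
        push_cast
        module
    · rw [hv1, hv2, ← lie_skew, hVC, neg_zero, map_zero, hfL, hfC]
      simp only [hg, Sum.elim_inl, Sum.elim_inr]
      simp only [lie_add, add_lie, lie_smul, smul_lie, rc', rd']
      have h2 : ∀ q : HV ⧸ N, ⁅(if n = 0 then γ • d else 0), q⁆ = 0 := by
        intro q; split
        · rw [smul_lie, rd, smul_zero]
        · exact zero_lie q
      simp [h2, rd]
    · rw [hv2, hv1, hVC, map_zero, hfL, hfC]
      simp only [hg, Sum.elim_inl, Sum.elim_inr]
      simp only [lie_add, add_lie, lie_smul, smul_lie, rc, rd]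
      simp
    · rw [hv2, hVC, map_zero, hfC]
      simp only [hg, Sum.elim_inr]
      simp only [lie_add, add_lie, lie_smul, smul_lie, rc, rd]
      simp
  -- extend to all elements
  have keyall : ∀ x y : Vir, f ⁅x, y⁆ = ⁅f x, f y⁆ := by
    have hB : (LinearMap.mk₂ ℂ (fun x y : Vir => f ⁅x, y⁆)
        (fun x x' y => by rw [add_lie, map_add])
        (fun r x y => by rw [smul_lie, map_smul])
        (fun x y y' => by rw [lie_add, map_add])
        (fun r x y => by rw [lie_smul, map_smul])) =
        (LinearMap.mk₂ ℂ (fun x y : Vir => ⁅f x, f y⁆)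
        (fun x x' y => by rw [map_add, add_lie])
        (fun r x y => by rw [map_smul, smul_lie])
        (fun x y y' => by rw [map_add, lie_add])
        (fun r x y => by rw [map_smul, lie_smul])) :=
      LinearMap.ext_basis bV bV key
    intro x y
    exact LinearMap.congr_fun (LinearMap.congr_fun hB x) y
  refine ⟨{ f with map_lie' := fun {x y} => keyall x y }, ?_, ?_, ?_⟩
  · intro n
    show f (Lb n) = _
    rw [hfL, hgmk]; rfl
  · show f CbL = _
    rw [hfC, hgmk']; rfl
  · -- injectivity via left inverse
    set p : ℤ ⊕ ℤ ⊕ Fin 3 → Vir := fun i => Sum.elim (fun n => Lb n)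
      (Sum.elim (fun _ => 0) (fun k => if k = 0 then CbL else 0)) i with hp
    set π : HV →ₗ[ℂ] Vir := bHV.constr ℂ p with hπ
    have hπL : ∀ n, π (L n) = Lb n := fun n => by
      rw [← hb1, hπ, Module.Basis.constr_basis]; rfl
    have hπI : ∀ n, π (I n) = 0 := fun n => by
      rw [← hb2, hπ, Module.Basis.constr_basis]; rfl
    have hπCL : π CL = CbL := by rw [← hb3, hπ, Module.Basis.constr_basis]; rfl
    have hπCLI : π CLI = 0 := by rw [← hb4, hπ, Module.Basis.constr_basis]; rfl
    have hπCI : π CI = 0 := by rw [← hb5, hπ, Module.Basis.constr_basis]; rfl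
    have hker : N.toSubmodule ≤ LinearMap.ker π := by
      intro x hx
      obtain ⟨r, rfl⟩ := Submodule.mem_span_singleton.mp (hNle hx)
      simp [hπCI]
    set πq : (HV ⧸ N) →ₗ[ℂ] Vir := Submodule.liftQ N.toSubmodule π hker with hπq
    have hπqmk : ∀ y : HV, πq (mk y) = π y := fun y => rfl
    have hleft : ∀ x, πq (f x) = x := by
      have hcomp : πq ∘ₗ f = LinearMap.id := by
        apply bV.ext
        rintro (n | _)
        · rw [LinearMap.comp_apply, LinearMap.id_apply, hv1, hfL, hgmk, hπqmk,
            map_add, map_add, map_smul, hπL, hπI, smul_zero, add_zero]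
          split
          · rw [map_smul, hπCLI, smul_zero, add_zero]
          · rw [map_zero, add_zero]
        · rw [LinearMap.comp_apply, LinearMap.id_apply, hv2, hfC, hgmk', hπqmk,
            map_add, map_smul, hπCL, hπCLI, smul_zero, add_zero]
      intro x
      exact congrFun (congrArg DFunLike.coe hcomp) x
    intro x y hxy
    calc x = πq (f x) := (hleft x).symm
    _ = πq (f y) := by exact congrArg πq hxy
    _ = y := hleft y
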